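/- arXiv:1212.1801 — 2 statements merged into one kernel-verified Lean document; each statement's English description precedes it below -/
import Mathlib

section
/- Let n and s be natural numbers with 1 ≤ s and 2·s ≤ n, let D > 0 and δ > 0 be reals, and let α, β ∈ (0,1] be reals. Suppose m₀ and m₁ are real numbers satisfying m₀ ≥ ((1−α)·log(1/β) − log 2)/D and m₁ ≥ ((1−β)·log(1/α) − log 2)/D, and suppose the average ((n−s)·m₀ + s·m₁)/n ≤ (log s + log(1/(4δ)))/D. Then 1 − (1−β)^s·(1−α)^(n−s) ≥ 1 − exp(−δ). -/
open Real

set_option maxHeartbeats 1000000 in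
/-- Arithmetic core of Theorem 1 (finite sample limitations of sequential
procedures). -/
theorem stmt_0 (n s : ℕ) (hs : 1 ≤ s) (hsn : 2 * s ≤ n)
    (D δ α β m₀ m₁ : ℝ) (hD : 0 < D) (hδ : 0 < δ)
    (hα0 : 0 < α) (hα1 : α ≤ 1) (hβ0 : 0 < β) (hβ1 : β ≤ 1)
    (hm0 : m₀ ≥ ((1 - α) * Real.log (1 / β) - Real.log 2) / D)
    (hm1 : m₁ ≥ ((1 - β) * Real.log (1 / α) - Real.log 2) / D)
    (hbudget : ((n - s : ℕ) * m₀ + s * m₁) / n ≤ (Real.log s + Real.log (1 / (4 * δ))) / D) :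
    1 - (1 - β) ^ s * (1 - α) ^ (n - s) ≥ 1 - Real.exp (-δ) := by
  by_contra hcon
  push_neg at hcon
  have hP : Real.exp (-δ) < (1 - β) ^ s * (1 - α) ^ (n - s) := by linarith
  -- basic numeric facts
  have hsR : (1 : ℝ) ≤ (s : ℝ) := by exact_mod_cast hs
  have hnR : (2 : ℝ) * s ≤ (n : ℝ) := by exact_mod_cast hsn
  have hN : (0 : ℝ) < n := by linarith
  have hns : s ≤ n := by omega
  have hcast : ((n - s : ℕ) : ℝ) = (n : ℝ) - s := by
    rw [Nat.cast_sub hns]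
  have hnsR : (s : ℝ) ≤ (n : ℝ) - s := by linarith
  have hβ' : (0 : ℝ) ≤ 1 - β := by linarith
  have hα' : (0 : ℝ) ≤ 1 - α := by linarith
  have hB1 : (1 - β) ^ s ≤ 1 := pow_le_one₀ hβ' (by linarith)
  have hA1 : (1 - α) ^ (n - s) ≤ 1 := pow_le_one₀ hα' (by linarith)
  have hBn : (0:ℝ) ≤ (1 - β) ^ s := pow_nonneg hβ' s
  have hAn : (0:ℝ) ≤ (1 - α) ^ (n - s) := pow_nonneg hα' _
  have hBs : Real.exp (-δ) < (1 - β) ^ s := by nlinarith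
  have hAs : Real.exp (-δ) < (1 - α) ^ (n - s) := by nlinarith
  have hApos : 0 < 1 - α := by
    rcases hα'.lt_or_eq with h | h
    · exact h
    · exfalso
      rw [← h, zero_pow (by omega : n - s ≠ 0)] at hAs
      exact absurd hAs (not_lt.2 (Real.exp_pos _).le)
  have hBpos : 0 < 1 - β := by
    rcases hβ'.lt_or_eq with h | h
    · exact h
    · exfalso
      rw [← h, zero_pow (by omega : s ≠ 0)] at hBs
      exact absurd hBs (not_lt.2 (Real.exp_pos _).le)
  have hlogA : -δ < ((n - s : ℕ) : ℝ) * Real.log (1 - α) := by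
    have := Real.log_lt_log (Real.exp_pos _) hAs
    rwa [Real.log_exp, Real.log_pow] at this
  have hlogB : -δ < (s : ℝ) * Real.log (1 - β) := by
    have := Real.log_lt_log (Real.exp_pos _) hBs
    rwa [Real.log_exp, Real.log_pow] at this
  have hlogA' : Real.log (1 - α) ≤ -α := by
    have := Real.log_le_sub_one_of_pos hApos; linarith
  have hlogB' : Real.log (1 - β) ≤ -β := by
    have := Real.log_le_sub_one_of_pos hBpos; linarith
  have hαsmall : ((n : ℝ) - s) * α < δ := by
    have h1 : ((n - s : ℕ) : ℝ) * Real.log (1 - α) ≤ ((n - s : ℕ) : ℝ) * (-α) :=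
      mul_le_mul_of_nonneg_left hlogA' (by positivity)
    rw [hcast] at h1 hlogA
    linarith
  have hβsmall : (s : ℝ) * β < δ := by
    have h1 : (s : ℝ) * Real.log (1 - β) ≤ (s : ℝ) * (-β) :=
      mul_le_mul_of_nonneg_left hlogB' (by positivity)
    linarith
  -- combine budget with Wald bounds
  have hX : ((n - s : ℕ) : ℝ) * m₀ + (s : ℝ) * m₁
      ≤ (Real.log s + Real.log (1 / (4 * δ))) / D * n := (div_le_iff₀ hN).1 hbudget
  have hDK : (((n - s : ℕ) : ℝ) * ((1 - α) * Real.log (1 / β) - Real.log 2)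
      + (s : ℝ) * ((1 - β) * Real.log (1 / α) - Real.log 2)) / D
      ≤ (Real.log s + Real.log (1 / (4 * δ))) * n / D := by
    have h1 : (((n - s : ℕ) : ℝ) * ((1 - α) * Real.log (1 / β) - Real.log 2)
        + (s : ℝ) * ((1 - β) * Real.log (1 / α) - Real.log 2)) / D
        ≤ ((n - s : ℕ) : ℝ) * m₀ + (s : ℝ) * m₁ := by
      have h0 := mul_le_mul_of_nonneg_left hm0 (by positivity : (0:ℝ) ≤ ((n - s : ℕ) : ℝ))
      have h2 := mul_le_mul_of_nonneg_left hm1 (by positivity : (0:ℝ) ≤ (s : ℝ))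
      have heq : (((n - s : ℕ) : ℝ) * ((1 - α) * Real.log (1 / β) - Real.log 2)
          + (s : ℝ) * ((1 - β) * Real.log (1 / α) - Real.log 2)) / D
          = ((n - s : ℕ) : ℝ) * (((1 - α) * Real.log (1 / β) - Real.log 2) / D)
          + (s : ℝ) * (((1 - β) * Real.log (1 / α) - Real.log 2) / D) := by ring
      rw [heq]
      linarith
    exact h1.trans (le_trans hX (le_of_eq (div_mul_eq_mul_div _ _ _)))
  have hK : ((n : ℝ) - s) * ((1 - α) * Real.log (1 / β))
      + (s : ℝ) * ((1 - β) * Real.log (1 / α))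
      ≤ (n : ℝ) * (Real.log s + Real.log (1 / (4 * δ)) + Real.log 2) := by
    have h := (div_le_div_iff_of_pos_right hD).1 hDK
    rw [hcast] at h
    nlinarith [h]
  -- simplify the logs
  have hlog4δ : Real.log (1 / (4 * δ)) = -(2 * Real.log 2 + Real.log δ) := by
    rw [one_div, Real.log_inv, Real.log_mul (by norm_num) hδ.ne']
    have : Real.log 4 = 2 * Real.log 2 := by
      rw [show (4:ℝ) = 2 ^ 2 by norm_num, Real.log_pow]
      push_cast; ring
    rw [this]
  rw [hlog4δ] at hK
  -- hK : K' ≤ n * (log s - log δ - log 2)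
  set Lβ := Real.log (1 / β) with hLβdef
  set Lα := Real.log (1 / α) with hLαdef
  have hLβ0 : 0 ≤ Lβ := Real.log_nonneg (one_le_one_div hβ0 hβ1)
  have hLα0 : 0 ≤ Lα := Real.log_nonneg (one_le_one_div hα0 hα1)
  have hL2 : (0.6931471803 : ℝ) < Real.log 2 := Real.log_two_gt_d9
  have hKey : (n : ℝ) * (Real.log s - Real.log δ - Real.log 2)
      < ((n : ℝ) - s) * ((1 - α) * Lβ) + (s : ℝ) * ((1 - β) * Lα) := by
    rcases le_or_gt δ s with hds | hds
    · -- main case δ ≤ s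
      have hL : 0 ≤ Real.log s - Real.log δ := by
        have := Real.log_le_log hδ hds
        linarith
      have hβlt : β < δ / s := by
        rw [lt_div_iff₀ (by linarith : (0:ℝ) < s)]
        linarith [hβsmall]
      have hαlt : α < δ / s := by
        rw [lt_div_iff₀ (by linarith : (0:ℝ) < s)]
        nlinarith [hαsmall]
      have hLβge : Real.log s - Real.log δ ≤ Lβ := by
        have := Real.log_lt_log hβ0 hβlt
        rw [Real.log_div hδ.ne' (by linarith : (s:ℝ) ≠ 0)] at this
        rw [hLβdef, one_div, Real.log_inv]
        linarith
      have hLαge : Real.log s - Real.log δ ≤ Lα := by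
        have := Real.log_lt_log hα0 hαlt
        rw [Real.log_div hδ.ne' (by linarith : (s:ℝ) ≠ 0)] at this
        rw [hLαdef, one_div, Real.log_inv]
        linarith
      -- log(s/δ) ≤ s / (e δ)
      have hePos : (0:ℝ) < Real.exp 1 := Real.exp_pos 1
      have hLup : Real.log s - Real.log δ ≤ (s : ℝ) / (Real.exp 1 * δ) := by
        have hpos : (0:ℝ) < (s : ℝ) / (Real.exp 1 * δ) := by positivity
        have h := Real.log_le_sub_one_of_pos hpos
        rw [Real.log_div (by linarith : (s:ℝ) ≠ 0) (by positivity),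
          Real.log_mul hePos.ne' hδ.ne', Real.log_exp] at h
        linarith
      have he : (2.7182818283 : ℝ) < Real.exp 1 := Real.exp_one_gt_d9
      -- 2 δ (log s - log δ) < n log 2
      have hkey2 : 2 * δ * (Real.log s - Real.log δ) < (n : ℝ) * Real.log 2 := by
        have h1 : 2 * δ * (Real.log s - Real.log δ) ≤ 2 * δ * ((s : ℝ) / (Real.exp 1 * δ)) :=
          mul_le_mul_of_nonneg_left hLup (by linarith)
        have h2 : 2 * δ * ((s : ℝ) / (Real.exp 1 * δ)) = 2 * s / Real.exp 1 := by
          field_simp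
        have h3 : 2 * (s:ℝ) / Real.exp 1 < 2 * s * Real.log 2 := by
          rw [div_lt_iff₀ hePos]
          have hprod : (1:ℝ) < Real.log 2 * Real.exp 1 := by nlinarith
          have := mul_lt_mul_of_pos_left hprod (show (0:ℝ) < 2 * s by linarith)
          linarith [this]
        have h4 : 2 * (s:ℝ) * Real.log 2 ≤ (n:ℝ) * Real.log 2 :=
          mul_le_mul_of_nonneg_right hnR (by linarith)
        linarith [h1.trans_eq h2]
      have hc1 : ((n:ℝ) - s) - δ ≤ ((n:ℝ) - s) * (1 - α) := by
        have he : ((n:ℝ) - s) * (1 - α) = ((n:ℝ) - s) - ((n:ℝ) - s) * α := by ring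
        rw [he]; linarith [hαsmall]
      have hc2 : (s:ℝ) - δ ≤ (s:ℝ) * (1 - β) := by
        have he : (s:ℝ) * (1 - β) = (s:ℝ) - (s:ℝ) * β := by ring
        rw [he]; linarith [hβsmall]
      have hc1' : (0:ℝ) ≤ ((n:ℝ) - s) * (1 - α) := mul_nonneg (by linarith) hα'
      have hc2' : (0:ℝ) ≤ (s:ℝ) * (1 - β) := mul_nonneg (by linarith) hβ'
      have hbig : ((n:ℝ) - 2 * δ) * (Real.log s - Real.log δ)
          ≤ ((n : ℝ) - s) * ((1 - α) * Lβ) + (s : ℝ) * ((1 - β) * Lα) := by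
        have t1 : ((n:ℝ) - s) * (1 - α) * (Real.log s - Real.log δ)
            ≤ ((n:ℝ) - s) * (1 - α) * Lβ := mul_le_mul_of_nonneg_left hLβge hc1'
        have t2 : (s:ℝ) * (1 - β) * (Real.log s - Real.log δ)
            ≤ (s:ℝ) * (1 - β) * Lα := mul_le_mul_of_nonneg_left hLαge hc2'
        have t3 : ((n:ℝ) - 2 * δ) * (Real.log s - Real.log δ)
            ≤ (((n:ℝ) - s) * (1 - α) + (s:ℝ) * (1 - β)) * (Real.log s - Real.log δ) :=
          mul_le_mul_of_nonneg_right (by linarith) hL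
        linarith [t1, t2, t3]
      linarith [hbig, hkey2]
    · -- easy case s < δ : RHS ≥ 0 > LHS
      have hLS : Real.log s ≤ Real.log δ := Real.log_le_log (by linarith) hds.le
      have hr1 : (0:ℝ) ≤ ((n:ℝ) - s) * ((1 - α) * Lβ) :=
        mul_nonneg (by linarith) (mul_nonneg hα' hLβ0)
      have hr2 : (0:ℝ) ≤ (s:ℝ) * ((1 - β) * Lα) :=
        mul_nonneg (by linarith) (mul_nonneg hβ' hLα0)
      have hneg : Real.log s - Real.log δ - Real.log 2 < 0 := by linarith
      have := mul_neg_of_pos_of_neg hN hneg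
      nlinarith [hr1, hr2, this]
  linarith [hK, hKey]
end

section
/- Let n, s, m, ρ be real numbers with n > 0, 0 ≤ s ≤ n, m ≥ 0, and 0 < ρ < 1, and let K ≥ 1 be a natural number. Then ∑_{k=1}^{K} (m·k·ρ²·n/(n + s·K²)) · ((1−ρ)^{k−1}·(n−s) + s) ≤ m·n. -/
open Real Finset

lemma geo_id (ρ : ℝ) : ∀ K : ℕ,
    ρ ^ 2 * ∑ k ∈ Finset.Icc 1 K, (k : ℝ) * (1 - ρ) ^ (k - 1)
      = 1 - (1 - ρ) ^ K * (1 + K * ρ) := by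
  intro K
  induction K with
  | zero => simp
  | succ K ih =>
    rw [Finset.sum_Icc_succ_top (by omega), mul_add, ih]
    push_cast
    rw [pow_succ]
    ring

lemma geo_bound (ρ : ℝ) (hρ0 : 0 < ρ) (hρ1 : ρ < 1) (K : ℕ) :
    ρ ^ 2 * ∑ k ∈ Finset.Icc 1 K, (k : ℝ) * (1 - ρ) ^ (k - 1) ≤ 1 := by
  rw [geo_id]
  have h1 : (0:ℝ) ≤ (1 - ρ) ^ K := pow_nonneg (by linarith) K
  have h2 : (0:ℝ) ≤ 1 + K * ρ := by positivity
  nlinarith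

/-- Measurement-budget inequality from Appendix D for Sequential
Thresholding. -/
theorem stmt_11 (n s m ρ : ℝ) (hn : 0 < n) (hs0 : 0 ≤ s) (hsn : s ≤ n)
    (hm : 0 ≤ m) (hρ0 : 0 < ρ) (hρ1 : ρ < 1) (K : ℕ) (hK : 1 ≤ K) :
    ∑ k ∈ Finset.Icc 1 K,
        (m * k * ρ ^ 2 * n / (n + s * (K : ℝ) ^ 2)) *
          ((1 - ρ) ^ (k - 1) * (n - s) + s) ≤ m * n := by
  have hD : 0 < n + s * (K : ℝ) ^ 2 := by positivity
  have key : ∑ k ∈ Finset.Icc 1 K,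
      (m * k * ρ ^ 2 * n / (n + s * (K : ℝ) ^ 2)) *
        ((1 - ρ) ^ (k - 1) * (n - s) + s)
      = (m * n / (n + s * (K : ℝ) ^ 2)) *
        ((n - s) * (ρ ^ 2 * ∑ k ∈ Finset.Icc 1 K, (k : ℝ) * (1 - ρ) ^ (k - 1))
          + s * ρ ^ 2 * ∑ k ∈ Finset.Icc 1 K, (k : ℝ)) := by
    simp only [mul_add, Finset.mul_sum, ← Finset.sum_add_distrib]
    apply Finset.sum_congr rfl
    intro k _
    field_simp
  rw [key]
  have hsum1 : (n - s) * (ρ ^ 2 * ∑ k ∈ Finset.Icc 1 K, (k : ℝ) * (1 - ρ) ^ (k - 1))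
      ≤ n - s := by
    have := geo_bound ρ hρ0 hρ1 K
    nlinarith [sub_nonneg.mpr hsn]
  have hsum2 : ∑ k ∈ Finset.Icc 1 K, (k : ℝ) ≤ (K : ℝ) ^ 2 := by
    calc ∑ k ∈ Finset.Icc 1 K, (k : ℝ) ≤ ∑ k ∈ Finset.Icc 1 K, (K : ℝ) := by
          apply Finset.sum_le_sum
          intro k hk
          exact_mod_cast Nat.cast_le.mpr (Finset.mem_Icc.mp hk).2
      _ = K * K := by
          rw [Finset.sum_const, Nat.card_Icc]
          simp [nsmul_eq_mul]
      _ = (K : ℝ) ^ 2 := by ring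
  have hsum2' : s * ρ ^ 2 * ∑ k ∈ Finset.Icc 1 K, (k : ℝ) ≤ s * (K : ℝ) ^ 2 := by
    have hρ2 : ρ ^ 2 ≤ 1 := by nlinarith
    have hsumnn : (0:ℝ) ≤ ∑ k ∈ Finset.Icc 1 K, (k : ℝ) :=
      Finset.sum_nonneg (fun k _ => by positivity)
    have h := mul_le_mul hρ2 hsum2 hsumnn zero_le_one
    nlinarith
  have hfrac : 0 ≤ m * n / (n + s * (K : ℝ) ^ 2) := by positivity
  calc (m * n / (n + s * (K : ℝ) ^ 2)) *
        ((n - s) * (ρ ^ 2 * ∑ k ∈ Finset.Icc 1 K, (k : ℝ) * (1 - ρ) ^ (k - 1))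
          + s * ρ ^ 2 * ∑ k ∈ Finset.Icc 1 K, (k : ℝ))
      ≤ (m * n / (n + s * (K : ℝ) ^ 2)) * (n + s * (K : ℝ) ^ 2) := by
        apply mul_le_mul_of_nonneg_left _ hfrac
        linarith
    _ = m * n := by field_simp
end
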